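/- For every unit vector x ∈ ℝ⁴, the derivative of the Hopf map sends the tangent space of S³ at x onto the tangent plane of the sphere S²(1/2) at ψ(x): every v ∈ ℝ⁴ with ⟨v, x⟩ = 0 satisfies ⟨Dψₓ(v), ψ(x)⟩ = 0, and conversely every w ∈ ℝ³ with ⟨w, ψ(x)⟩ = 0 equals Dψₓ(v) for some v ∈ ℝ⁴ with ⟨v, x⟩ = 0. -/

import Mathlib

noncomputable section

/-- The Hopf map `ψ : ℝ⁴ → ℝ³`. -/
def hopf (x : EuclideanSpace ℝ (Fin 4)) : EuclideanSpace ℝ (Fin 3) :=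
  (WithLp.equiv 2 (Fin 3 → ℝ)).symm
    ![x 0 * x 2 + x 1 * x 3, x 1 * x 2 - x 0 * x 3,
      ((x 0) ^ 2 + (x 1) ^ 2 - (x 2) ^ 2 - (x 3) ^ 2) / 2]

def hopfDerivFun (x v : EuclideanSpace ℝ (Fin 4)) : EuclideanSpace ℝ (Fin 3) :=
  (WithLp.equiv 2 (Fin 3 → ℝ)).symm
    ![v 0 * x 2 + x 0 * v 2 + v 1 * x 3 + x 1 * v 3,
      v 1 * x 2 + x 1 * v 2 - v 0 * x 3 - x 0 * v 3,
      x 0 * v 0 + x 1 * v 1 - x 2 * v 2 - x 3 * v 3]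

lemma hopf_apply (x : EuclideanSpace ℝ (Fin 4)) :
    hopf x = ![x 0 * x 2 + x 1 * x 3, x 1 * x 2 - x 0 * x 3,
      ((x 0) ^ 2 + (x 1) ^ 2 - (x 2) ^ 2 - (x 3) ^ 2) / 2] := rfl

def hopfDeriv (x : EuclideanSpace ℝ (Fin 4)) :
    EuclideanSpace ℝ (Fin 4) →L[ℝ] EuclideanSpace ℝ (Fin 3) :=
  LinearMap.toContinuousLinearMap
    { toFun := hopfDerivFun x
      map_add' := fun u v => by
        ext i
        fin_cases i <;>
          simp [hopfDerivFun, PiLp.add_apply] <;> ring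
      map_smul' := fun a v => by
        ext i
        fin_cases i <;>
          simp [hopfDerivFun, PiLp.smul_apply, smul_eq_mul] <;> ring }

lemma hopfDeriv_apply (x v : EuclideanSpace ℝ (Fin 4)) :
    hopfDeriv x v = hopfDerivFun x v := rfl

lemma hopf_add (x v : EuclideanSpace ℝ (Fin 4)) :
    hopf (x + v) = hopf x + hopfDerivFun x v + hopf v := by
  ext i
  fin_cases i <;>
    simp [hopf, hopfDerivFun, PiLp.add_apply] <;> ring

lemma hopf_norm (v : EuclideanSpace ℝ (Fin 4)) : ‖hopf v‖ = ‖v‖ ^ 2 / 2 := by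
  have h1 : ‖hopf v‖ ^ 2 = (‖v‖ ^ 2 / 2) ^ 2 := by
    rw [← real_inner_self_eq_norm_sq, ← real_inner_self_eq_norm_sq]
    simp only [PiLp.inner_apply, RCLike.inner_apply, conj_trivial, Fin.sum_univ_four,
      Fin.sum_univ_three, hopf_apply]
    simp only [Matrix.cons_val_zero, Matrix.cons_val_one, Matrix.head_cons,
      Matrix.cons_val_two, Matrix.tail_cons]
    ring
  have h2 : (0:ℝ) ≤ ‖hopf v‖ := norm_nonneg _
  have h3 : (0:ℝ) ≤ ‖v‖ ^ 2 / 2 := by positivity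
  nlinarith [sq_nonneg (‖hopf v‖ - ‖v‖ ^ 2 / 2)]

lemma hopf_hasFDerivAt (x : EuclideanSpace ℝ (Fin 4)) :
    HasFDerivAt hopf (hopfDeriv x) x := by
  rw [hasFDerivAt_iff_isLittleO_nhds_zero]
  have heq : (fun h : EuclideanSpace ℝ (Fin 4) => hopf (x + h) - hopf x - hopfDeriv x h)
      = fun h => hopf h := by
    funext h
    rw [hopfDeriv_apply, hopf_add]
    abel
  rw [heq, Asymptotics.isLittleO_iff]
  intro c hc
  rw [Metric.eventually_nhds_iff]
  refine ⟨2 * c, by positivity, fun h hh => ?_⟩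
  rw [dist_zero_right] at hh
  rw [hopf_norm]
  have : ‖h‖ ^ 2 = ‖h‖ * ‖h‖ := sq ‖h‖
  nlinarith [norm_nonneg h]

lemma hopf_fderiv (x : EuclideanSpace ℝ (Fin 4)) :
    fderiv ℝ hopf x = hopfDeriv x := (hopf_hasFDerivAt x).fderiv

/-- The derivative of the Hopf map sends the tangent space of `S³` at `x` onto the
tangent plane of `S²(1/2)` at `ψ(x)`. -/
theorem hopf_derivative_onto_tangent_plane (x : EuclideanSpace ℝ (Fin 4)) (hx : ‖x‖ = 1) :
    (∀ v : EuclideanSpace ℝ (Fin 4), (inner ℝ v x : ℝ) = 0 →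
      (inner ℝ (fderiv ℝ hopf x v) (hopf x) : ℝ) = 0) ∧
    ∀ w : EuclideanSpace ℝ (Fin 3), (inner ℝ w (hopf x) : ℝ) = 0 →
      ∃ v : EuclideanSpace ℝ (Fin 4), (inner ℝ v x : ℝ) = 0 ∧ fderiv ℝ hopf x v = w := by
  have hx2 : x 0 ^ 2 + x 1 ^ 2 + x 2 ^ 2 + x 3 ^ 2 = 1 := by
    have h : (inner ℝ x x : ℝ) = 1 := by
      rw [real_inner_self_eq_norm_sq, hx]; norm_num
    rw [PiLp.inner_apply] at h
    simpa [PiLp.inner_apply, RCLike.inner_apply, Fin.sum_univ_four, sq] using h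
  constructor
  · intro v hv
    rw [hopf_fderiv, hopfDeriv_apply]
    simp only [PiLp.inner_apply, RCLike.inner_apply, conj_trivial, Fin.sum_univ_four,
      Fin.sum_univ_three, hopfDerivFun, hopf_apply, WithLp.equiv_symm_apply, WithLp.ofLp_toLp,
      Matrix.cons_val_zero, Matrix.cons_val_one, Matrix.head_cons, Matrix.cons_val_two,
      Matrix.tail_cons] at hv ⊢
    linear_combination ((x 0 ^ 2 + x 1 ^ 2 + x 2 ^ 2 + x 3 ^ 2) / 2) * hv
  · intro w hw
    refine ⟨(WithLp.equiv 2 (Fin 4 → ℝ)).symm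
      ![x 2 * w 0 - x 3 * w 1 + x 0 * w 2,
        x 3 * w 0 + x 2 * w 1 + x 1 * w 2,
        x 0 * w 0 + x 1 * w 1 - x 2 * w 2,
        x 1 * w 0 - x 0 * w 1 - x 3 * w 2], ?_, ?_⟩
    · simp only [PiLp.inner_apply, RCLike.inner_apply, conj_trivial, Fin.sum_univ_four,
        Fin.sum_univ_three, hopf_apply, WithLp.equiv_symm_apply, WithLp.ofLp_toLp, Matrix.cons_val_zero,
        Matrix.cons_val_one, Matrix.head_cons, Matrix.cons_val_two, Matrix.tail_cons,
        Matrix.cons_val_three] at hw ⊢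
      linear_combination 2 * hw
    · rw [hopf_fderiv, hopfDeriv_apply]
      ext i
      fin_cases i
      · show hopfDerivFun x _ (0 : Fin 3) = w (0 : Fin 3)
        simp only [hopfDerivFun, WithLp.equiv_symm_apply, WithLp.ofLp_toLp, Matrix.cons_val_zero,
          Matrix.cons_val_one, Matrix.head_cons, Matrix.cons_val_two, Matrix.tail_cons,
          Matrix.cons_val_three]
        linear_combination w 0 * hx2
      · show hopfDerivFun x _ (1 : Fin 3) = w (1 : Fin 3)
        simp only [hopfDerivFun, WithLp.equiv_symm_apply, WithLp.ofLp_toLp, Matrix.cons_val_zero,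
          Matrix.cons_val_one, Matrix.head_cons, Matrix.cons_val_two, Matrix.tail_cons,
          Matrix.cons_val_three]
        linear_combination w 1 * hx2
      · show hopfDerivFun x _ (2 : Fin 3) = w (2 : Fin 3)
        simp only [hopfDerivFun, WithLp.equiv_symm_apply, WithLp.ofLp_toLp, Matrix.cons_val_zero,
          Matrix.cons_val_one, Matrix.head_cons, Matrix.cons_val_two, Matrix.tail_cons,
          Matrix.cons_val_three]
        linear_combination w 2 * hx2
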